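/- Let d be a rational prime, m ≥ 2, n ≥ 1. Then G_{d,m,n}(c) ≡ G_{d,0,n}(c)^{M_{m,n}} (mod d) in ℤ[c], where M_{m,n} = d^{m−1}(d−1) if n ∤ m−1 and M_{m,n} = (d^{m−1}−1)(d−1) if n | m−1. -/

import Mathlib

open Polynomial

noncomputable section

/-- `critPoly d i` is `f_{c,d}^i(0)` as a polynomial in the variable `c` over `ℤ`,
where `f_{c,d}(x) = x^d + c`. -/
def critPoly (d : ℕ) : ℕ → Polynomial ℤ
  | 0 => 0
  | i + 1 => critPoly d i ^ d + X

/-- The field of rational functions in `c` over `ℚ`, realized as the fraction field of `ℤ[c]`. -/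
abbrev RF : Type := FractionRing (Polynomial ℤ)

/-- The natural inclusion `ℤ[c] → ℚ(c)`. -/
def toRF (p : Polynomial ℤ) : RF := algebraMap (Polynomial ℤ) RF p

/-- `G_{d,0,n} = ∏_{k ∣ n} (f_{c,d}^k(0))^{μ(n/k)}` as a rational function. -/
def G0Rat (d n : ℕ) : RF :=
  ∏ k ∈ n.divisors, toRF (critPoly d k) ^ (ArithmeticFunction.moebius (n / k))

/-- `F_{d,m,n}` as a rational function. -/
def FRat (d m n : ℕ) : RF :=
  ∏ k ∈ n.divisors,
    ((toRF (critPoly d (m + k)) - toRF (critPoly d m)) /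
      (toRF (critPoly d (m - 1 + k)) - toRF (critPoly d (m - 1)))) ^
      (ArithmeticFunction.moebius (n / k))

/-- `G_{d,m,n}` (for `m ≥ 2`) as a rational function. -/
def GRat (d m n : ℕ) : RF :=
  if n ∣ m - 1 then FRat d m n / FRat d 1 n else FRat d m n

/-- `G : ℤ[c]` is the Misiurewicz polynomial `G_{d,m,n}` (for `m ≥ 2`). -/
def IsMisiurewicz (d m n : ℕ) (G : Polynomial ℤ) : Prop := toRF G = GRat d m n

/-- `G0 : ℤ[c]` is the polynomial `G_{d,0,n}`. -/
def IsG0 (d n : ℕ) (G0 : Polynomial ℤ) : Prop := toRF G0 = G0Rat d n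

set_option synthInstance.maxHeartbeats 1000000
set_option maxHeartbeats 1000000

/- ### Auxiliary material -/

namespace MisAux

lemma critPoly_zero (d : ℕ) : critPoly d 0 = 0 := rfl
lemma critPoly_succ (d i : ℕ) : critPoly d (i+1) = critPoly d i ^ d + X := rfl

lemma critPoly_monic (d : ℕ) (hd : 2 ≤ d) :
    ∀ k, 1 ≤ k → (critPoly d k).Monic ∧ (critPoly d k).natDegree = d ^ (k-1) := by
  intro k hk
  induction k with
  | zero => omega
  | succ i ih =>
    rcases Nat.eq_zero_or_pos i with hi | hi
    · subst hi
      simp [critPoly_succ, critPoly_zero, zero_pow (by omega : d ≠ 0), monic_X]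
    · obtain ⟨hmon, hdeg⟩ := ih hi
      have hpm : (critPoly d i ^ d).Monic := hmon.pow d
      have hdp : (critPoly d i ^ d).natDegree = d ^ i := by
        rw [natDegree_pow, hdeg, ← pow_succ']
        congr 1
        omega
      have hlt : (X : Polynomial ℤ).degree < (critPoly d i ^ d).degree := by
        rw [degree_X, degree_eq_natDegree hpm.ne_zero, hdp]
        exact_mod_cast Nat.one_lt_pow (by omega) (by omega)
      refine ⟨by rw [critPoly_succ]; exact hpm.add_of_left hlt, ?_⟩
      have h1 := degree_add_eq_left_of_degree_lt hlt
      rw [critPoly_succ]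
      have h2 : (critPoly d i ^ d + X).degree = ((d ^ i : ℕ) : WithBot ℕ) := by
        rw [h1, degree_eq_natDegree hpm.ne_zero, hdp]
      rw [natDegree_eq_of_degree_eq_some h2]; simp

lemma critPoly_ne_zero (d : ℕ) (hd : 2 ≤ d) {k : ℕ} (hk : 1 ≤ k) : critPoly d k ≠ 0 :=
  ((critPoly_monic d hd k hk).1).ne_zero

lemma A_ne_zero (d : ℕ) (hd : 2 ≤ d) (j : ℕ) {k : ℕ} (hk : 1 ≤ k) :
    critPoly d (j + k) - critPoly d j ≠ 0 := by
  rcases Nat.eq_zero_or_pos j with hj | hj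
  · subst hj
    simpa [critPoly_zero] using critPoly_ne_zero d hd (by omega : 1 ≤ 0 + k)
  · intro h
    have h' : critPoly d (j + k) = critPoly d j := by linear_combination (norm := ring_nf) h
    have h1 := (critPoly_monic d hd (j+k) (by omega)).2
    have h2 := (critPoly_monic d hd j (by omega)).2
    rw [h', h2] at h1
    have := Nat.pow_right_injective hd h1.symm
    omega

/-- Frobenius congruence. -/
lemma map_A (d : ℕ) (hd : d.Prime) (j k : ℕ) :
    (critPoly d (j + k) - critPoly d j).map (Int.castRingHom (ZMod d)) =
      ((critPoly d k).map (Int.castRingHom (ZMod d))) ^ (d ^ j) := by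
  haveI : Fact d.Prime := ⟨hd⟩
  induction j with
  | zero => simp [critPoly]
  | succ j ih =>
    have h1 : critPoly d (j + 1 + k) = critPoly d (j + k) ^ d + X := by
      rw [show j + 1 + k = (j + k) + 1 by ring]; rfl
    have h2 : critPoly d (j + 1) = critPoly d j ^ d + X := rfl
    rw [h1, h2]
    have h3 : (critPoly d (j+k) ^ d + X) - (critPoly d j ^ d + X)
        = critPoly d (j+k) ^ d - critPoly d j ^ d := by ring
    rw [h3, Polynomial.map_sub, Polynomial.map_pow, Polynomial.map_pow,
      ← sub_pow_char ((critPoly d (j+k)).map (Int.castRingHom (ZMod d)))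
        ((critPoly d j).map (Int.castRingHom (ZMod d))),
      ← Polynomial.map_sub, ih, ← pow_mul, ← pow_succ]

/-- The general product of powers of `critPoly d (j+k) - critPoly d j`. -/
def NN (d n j : ℕ) (e : ℕ → ℕ) : Polynomial ℤ :=
  ∏ k ∈ n.divisors, (critPoly d (j + k) - critPoly d j) ^ (e k)

lemma NN_ne_zero (d n j : ℕ) (hd : 2 ≤ d) (e : ℕ → ℕ) : NN d n j e ≠ 0 :=
  Finset.prod_ne_zero_iff.mpr fun k hk =>
    pow_ne_zero _ (A_ne_zero d hd j (Nat.pos_of_mem_divisors hk))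

lemma map_NN (d n j : ℕ) (hd : d.Prime) (e : ℕ → ℕ) :
    (NN d n j e).map (Int.castRingHom (ZMod d)) =
      ((NN d n 0 e).map (Int.castRingHom (ZMod d))) ^ (d ^ j) := by
  rw [NN, NN, Polynomial.map_prod, Polynomial.map_prod, ← Finset.prod_pow]
  refine Finset.prod_congr rfl fun k _ => ?_
  rw [Polynomial.map_pow, Polynomial.map_pow, map_A d hd j k, map_A d hd 0 k,
    pow_zero, pow_one, ← pow_mul, ← pow_mul, mul_comm]

lemma map_NN_ne_zero (d n j : ℕ) (hd : d.Prime) (e : ℕ → ℕ) :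
    (NN d n j e).map (Int.castRingHom (ZMod d)) ≠ 0 := by
  haveI : Fact d.Prime := ⟨hd⟩
  rw [NN, Polynomial.map_prod]
  refine Finset.prod_ne_zero_iff.mpr fun k hk => ?_
  rw [Polynomial.map_pow, map_A d hd j k]
  exact pow_ne_zero _ (pow_ne_zero _
    (((critPoly_monic d hd.two_le k (Nat.pos_of_mem_divisors hk)).1.map
      (Int.castRingHom (ZMod d))).ne_zero))

def pE (n : ℕ) (k : ℕ) : ℕ := (ArithmeticFunction.moebius (n / k)).toNat
def nE (n : ℕ) (k : ℕ) : ℕ := (-(ArithmeticFunction.moebius (n / k))).toNat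

lemma zpow_split {K : Type*} [Field K] (t : K) (e : ℤ) :
    t ^ e = t ^ e.toNat / t ^ (-e).toNat := by
  rcases le_or_gt 0 e with h | h
  · have h1 : (-e).toNat = 0 := by omega
    rw [h1, pow_zero, div_one, ← zpow_natCast, Int.toNat_of_nonneg h]
  · have h1 : e.toNat = 0 := by omega
    rw [h1, pow_zero, one_div, ← zpow_natCast t, ← zpow_neg]
    congr 1
    omega

lemma toRF_ne_zero {p : Polynomial ℤ} (hp : p ≠ 0) : toRF p ≠ 0 :=
  (map_ne_zero_iff _ (IsFractionRing.injective (Polynomial ℤ) RF)).mpr hp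

lemma prod_ratio (d n j : ℕ) :
    (∏ k ∈ n.divisors,
      toRF (critPoly d (j + k) - critPoly d j) ^ (ArithmeticFunction.moebius (n / k))) =
      toRF (NN d n j (pE n)) / toRF (NN d n j (nE n)) := by
  have h : ∀ k ∈ n.divisors,
      toRF (critPoly d (j + k) - critPoly d j) ^ (ArithmeticFunction.moebius (n / k)) =
      toRF (critPoly d (j + k) - critPoly d j) ^ (pE n k) /
        toRF (critPoly d (j + k) - critPoly d j) ^ (nE n k) := fun k _ =>
    zpow_split _ _
  rw [Finset.prod_congr rfl h, Finset.prod_div_distrib]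
  simp only [NN, toRF, map_prod, map_pow]

lemma FRat_eq (d m n : ℕ) :
    FRat d m n = (toRF (NN d n m (pE n)) / toRF (NN d n m (nE n))) /
      (toRF (NN d n (m-1) (pE n)) / toRF (NN d n (m-1) (nE n))) := by
  rw [FRat, ← prod_ratio, ← prod_ratio, ← Finset.prod_div_distrib]
  refine Finset.prod_congr rfl fun k _ => ?_
  rw [← div_zpow]
  congr 1
  simp only [toRF, map_sub]

lemma G0Rat_eq (d n : ℕ) :
    G0Rat d n = toRF (NN d n 0 (pE n)) / toRF (NN d n 0 (nE n))  := by
  rw [G0Rat, ← prod_ratio]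
  refine Finset.prod_congr rfl fun k _ => ?_
  congr 2
  simp [critPoly_zero]

/-- Cancellation lemma, case `n ∤ m - 1`. -/
lemma cancel1 {S : Type*} [CommRing S] [IsDomain S] (g g0 R Q : S) (hR : R ≠ 0)
    (hg0 : g0 ≠ 0) (a b e : ℕ) (hQ : Q = g0 * R) (hab : b = e + a)
    (h : g * R ^ b * Q ^ a = Q ^ b * R ^ a) : g = g0 ^ e := by
  subst hQ
  have key : g * (g0 ^ a * R ^ (b + a)) = g0 ^ e * (g0 ^ a * R ^ (b + a)) := by
    calc g * (g0 ^ a * R ^ (b + a)) = g * R ^ b * (g0 * R) ^ a := by ring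
    _ = (g0 * R) ^ b * R ^ a := h
    _ = g0 ^ b * R ^ (b + a) := by ring
    _ = g0 ^ e * (g0 ^ a * R ^ (b + a)) := by rw [hab, pow_add]; ring
  exact mul_right_cancel₀ (mul_ne_zero (pow_ne_zero _ hg0) (pow_ne_zero _ hR)) key

/-- Cancellation lemma, case `n ∣ m - 1`. -/
lemma cancel2 {S : Type*} [CommRing S] [IsDomain S] (g g0 R Q : S) (hR : R ≠ 0)
    (hg0 : g0 ≠ 0) (a b c e : ℕ) (hQ : Q = g0 * R) (hab : b + 1 = e + (a + c))
    (h : g * R ^ b * Q ^ a * Q ^ c * R = Q ^ b * R ^ a * R ^ c * Q) : g = g0 ^ e := by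
  subst hQ
  have key : g * (g0 ^ (a + c) * R ^ (b + a + c + 1)) =
      g0 ^ e * (g0 ^ (a + c) * R ^ (b + a + c + 1)) := by
    calc g * (g0 ^ (a + c) * R ^ (b + a + c + 1))
        = g * R ^ b * (g0 * R) ^ a * (g0 * R) ^ c * R := by ring
    _ = (g0 * R) ^ b * R ^ a * R ^ c * (g0 * R) := h
    _ = g0 ^ (b + 1) * R ^ (b + a + c + 1) := by ring
    _ = g0 ^ e * (g0 ^ (a + c) * R ^ (b + a + c + 1)) := by rw [hab, pow_add]; ring
  exact mul_right_cancel₀ (mul_ne_zero (pow_ne_zero _ hg0) (pow_ne_zero _ hR)) key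

end MisAux

open MisAux

/-- Let `d` be a prime, `m ≥ 2`, `n ≥ 1`. Then
`G_{d,m,n} ≡ G_{d,0,n}^{M_{m,n}} (mod d)` in `ℤ[c]`, where `M_{m,n} = d^{m-1}(d-1)` if
`n ∤ m-1` and `M_{m,n} = (d^{m-1}-1)(d-1)` if `n ∣ m-1`. -/
theorem misiurewicz_congruence_mod_d (d m n : ℕ) (hd : d.Prime) (hm : 2 ≤ m) (hn : 1 ≤ n)
    (G G0 : Polynomial ℤ) (hG : IsMisiurewicz d m n G) (hG0 : IsG0 d n G0) :
    G.map (Int.castRingHom (ZMod d)) =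
      G0.map (Int.castRingHom (ZMod d)) ^
        (if n ∣ m - 1 then (d ^ (m - 1) - 1) * (d - 1) else d ^ (m - 1) * (d - 1)) := by
  haveI : Fact d.Prime := ⟨hd⟩
  have hd2 : 2 ≤ d := hd.two_le
  set φ := Int.castRingHom (ZMod d) with hφ
  -- nonzeroness in RF
  have hTP : ∀ j, toRF (NN d n j (pE n)) ≠ 0 := fun j => toRF_ne_zero (NN_ne_zero d n j hd2 _)
  have hTQ : ∀ j, toRF (NN d n j (nE n)) ≠ 0 := fun j => toRF_ne_zero (NN_ne_zero d n j hd2 _)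
  -- the polynomial identity for G0
  have hG0p : G0 * NN d n 0 (nE n) = NN d n 0 (pE n) := by
    apply IsFractionRing.injective (Polynomial ℤ) RF
    rw [map_mul]
    show toRF G0 * toRF (NN d n 0 (nE n)) = toRF (NN d n 0 (pE n))
    rw [hG0, G0Rat_eq d n]
    exact div_mul_cancel₀ _ (hTQ 0)
  -- mapped versions
  set Qm : Polynomial (ZMod d) := (NN d n 0 (pE n)).map φ with hQmdef
  set Rm : Polynomial (ZMod d) := (NN d n 0 (nE n)).map φ with hRmdef
  have hQm0 : Qm ≠ 0 := map_NN_ne_zero d n 0 hd _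
  have hRm0 : Rm ≠ 0 := map_NN_ne_zero d n 0 hd _
  have hG0m : (G0.map φ) * Rm = Qm := by rw [hQmdef, hRmdef, ← Polynomial.map_mul, hG0p]
  have hg0 : G0.map φ ≠ 0 := by
    intro h
    exact hQm0 (by rw [← hG0m, h, zero_mul])
  have hm1 : m - 1 + 1 = m := by omega
  have hdm : d ^ m = d ^ (m - 1) * d := by rw [← pow_succ, hm1]
  have h1d : 1 ≤ d ^ (m - 1) := Nat.one_le_pow _ _ (by omega)
  rw [IsMisiurewicz, GRat] at hG
  by_cases hdvd : n ∣ m - 1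
  · rw [if_pos hdvd] at hG ⊢
    rw [FRat_eq d m n, FRat_eq d 1 n, show (1:ℕ) - 1 = 0 from rfl] at hG
    have hpoly : G * (NN d n m (nE n) * NN d n (m-1) (pE n) * NN d n 1 (pE n) * NN d n 0 (nE n))
        = NN d n m (pE n) * (NN d n (m-1) (nE n) * NN d n 1 (nE n) * NN d n 0 (pE n)) := by
      apply IsFractionRing.injective (Polynomial ℤ) RF
      simp only [map_mul]
      show toRF G * (toRF _ * toRF _ * toRF _ * toRF _) = toRF _ * (toRF _ * toRF _ * toRF _)
      rw [hG]
      have h1 := hTP m; have h2 := hTQ m; have h3 := hTP (m-1); have h4 := hTQ (m-1)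
      have h5 := hTP 1; have h6 := hTQ 1; have h7 := hTP 0; have h8 := hTQ 0
      field_simp
    have hmap := congrArg (Polynomial.map φ) hpoly
    simp only [Polynomial.map_mul, hφ, map_NN d n m hd, map_NN d n (m-1) hd, map_NN d n 1 hd,
      pow_one] at hmap
    simp only [← hφ, ← hQmdef, ← hRmdef] at hmap
    have h : (G.map φ) * Rm ^ (d ^ m) * Qm ^ (d ^ (m-1)) * Qm ^ d * Rm
        = Qm ^ (d ^ m) * Rm ^ (d ^ (m-1)) * Rm ^ d * Qm := by linear_combination hmap
    refine cancel2 (G.map φ) (G0.map φ) Rm Qm hRm0 hg0 (d ^ (m-1)) (d ^ m) d _ hG0m.symm ?_ h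
    rw [hdm]
    zify [h1d, (by omega : 1 ≤ d)]
    ring
  · rw [if_neg hdvd] at hG ⊢
    rw [FRat_eq d m n] at hG
    have hpoly : G * (NN d n m (nE n) * NN d n (m-1) (pE n))
        = NN d n m (pE n) * NN d n (m-1) (nE n) := by
      apply IsFractionRing.injective (Polynomial ℤ) RF
      simp only [map_mul]
      show toRF G * (toRF _ * toRF _) = toRF _ * toRF _
      rw [hG]
      have h1 := hTP m; have h2 := hTQ m; have h3 := hTP (m-1); have h4 := hTQ (m-1)
      field_simp
    have hmap := congrArg (Polynomial.map φ) hpoly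
    simp only [Polynomial.map_mul, hφ, map_NN d n m hd, map_NN d n (m-1) hd] at hmap
    simp only [← hφ, ← hQmdef, ← hRmdef] at hmap
    have h : (G.map φ) * Rm ^ (d ^ m) * Qm ^ (d ^ (m-1)) = Qm ^ (d ^ m) * Rm ^ (d ^ (m-1)) := by
      linear_combination hmap
    refine cancel1 (G.map φ) (G0.map φ) Rm Qm hRm0 hg0 (d ^ (m-1)) (d ^ m) _ hG0m.symm ?_ h
    rw [hdm]
    zify [(by omega : 1 ≤ d)]
    ring
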